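/- Let j : ℕ → ℕ (indexed from 1) be the alternating sequence with j n = 2 for odd n and j n = 3 for even n, so that I_{2k} = 6^k and I_{2k+1} = 2·6^k, and let s ∈ ℂ with Re(s) > 1. Then the spectral zeta function of the associated Laakso space satisfies ζ_L(s) = (ζ(2s)/π^{2s}) · [ ((2^{2s} + 4)/12 + (2^{2s−1} + 1)/2^{2s}) · 24/(6^{2s} − 24) + (3·2^{2s} − 6 + (6·2^{2s} − 12)/2^{2s})/(6^{2s} − 4) + (2^{2s+1} − 2)/2^{2s} + 1 ], where ζ denotes the Riemann zeta function and all complex powers are principal. -/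

import Mathlib

open Real

private lemma cpowR_mul (a b : ℝ) (ha : 0 ≤ a) (hb : 0 ≤ b) (w : ℂ) :
    ((a * b : ℝ) : ℂ) ^ w = ((a : ℝ) : ℂ) ^ w * ((b : ℝ) : ℂ) ^ w := by
  rw [Complex.ofReal_mul]; exact Complex.mul_cpow_ofReal_nonneg ha hb w

private lemma cpowR_sq (a : ℝ) (ha : 0 < a) (s : ℂ) :
    ((a ^ 2 : ℝ) : ℂ) ^ (-s) = ((a : ℝ) : ℂ) ^ (-(2 * s)) := by
  rw [sq, cpowR_mul a a ha.le ha.le, ← Complex.cpow_add _ _ (Complex.ofReal_ne_zero.2 ha.ne')]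
  ring_nf

private lemma cpowR_pow (a : ℝ) (ha : 0 ≤ a) (w : ℂ) (k : ℕ) :
    ((a ^ k : ℝ) : ℂ) ^ w = (((a : ℝ) : ℂ) ^ w) ^ k := by
  induction k with
  | zero => simp
  | succ k ih =>
    rw [pow_succ, cpowR_mul _ a (pow_nonneg ha k) ha, ih, pow_succ]

private lemma tsum_int_base {w : ℂ} (hw : 1 < w.re) :
    ∑' k : ℕ, (((k : ℝ) + 1 : ℝ) : ℂ) ^ (-w) = riemannZeta w := by
  rw [zeta_eq_tsum_one_div_nat_add_one_cpow hw]
  refine tsum_congr fun k => ?_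
  rw [Complex.cpow_neg, one_div]
  norm_num

private lemma tsum_half_base {w : ℂ} (hw : 1 < w.re) :
    ∑' k : ℕ, (((k : ℝ) + 1 / 2 : ℝ) : ℂ) ^ (-w) = ((2 : ℂ) ^ w - 1) * riemannZeta w := by
  have hw0 : w ≠ 0 := Complex.ne_zero_of_one_lt_re hw
  have h2 : (2 : ℂ) ^ w ≠ 0 := by
    simp [Complex.cpow_eq_zero_iff]
  have hsum : Summable (fun n : ℕ => 1 / (n : ℂ) ^ w) := Complex.summable_one_div_nat_cpow.2 hw
  set f : ℕ → ℂ := fun n => 1 / (n : ℂ) ^ w with hf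
  have heven : ∀ k : ℕ, f (2 * k) = (2 : ℂ) ^ (-w) * f k := by
    intro k
    rcases Nat.eq_zero_or_pos k with rfl | hk
    · simp [hf, Complex.zero_cpow hw0]
    · have hksplit : ((2 * k : ℕ) : ℂ) = ((2 : ℝ) : ℂ) * (((k : ℝ)) : ℂ) := by push_cast; ring
      have : (((2 * k : ℕ)) : ℂ) ^ w = ((2 : ℝ) : ℂ) ^ w * (((k : ℝ) : ℂ)) ^ w := by
        rw [hksplit, Complex.mul_cpow_ofReal_nonneg (by norm_num) (Nat.cast_nonneg k)]
      simp only [hf]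
      rw [this, Complex.cpow_neg]
      push_cast
      rw [mul_comm, div_eq_mul_inv, mul_inv, one_mul, mul_comm]
      congr 1
      rw [one_div]
  have hse : Summable (fun k => f (2 * k)) := by
    rw [show (fun k => f (2 * k)) = fun k => (2 : ℂ) ^ (-w) * f k from funext heven]
    exact hsum.mul_left _
  have hso : Summable (fun k => f (2 * k + 1)) :=
    hsum.comp_injective (fun a b h => by omega)
  have hsplit := tsum_even_add_odd hse hso
  rw [← hf, ← zeta_eq_tsum_one_div_nat_cpow hw] at hsplit
  have he_val : ∑' k, f (2 * k) = (2 : ℂ) ^ (-w) * riemannZeta w := by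
    rw [show (fun k => f (2 * k)) = fun k => (2 : ℂ) ^ (-w) * f k from funext heven,
      tsum_mul_left, ← hf, ← zeta_eq_tsum_one_div_nat_cpow hw]
  have hodd_val : ∑' k, f (2 * k + 1) = (1 - (2 : ℂ) ^ (-w)) * riemannZeta w := by
    have := hsplit
    rw [he_val] at this
    linear_combination this
  -- now relate the half-integer sum
  have hterm : ∀ k : ℕ, (((k : ℝ) + 1 / 2 : ℝ) : ℂ) ^ (-w) = (2 : ℂ) ^ w * f (2 * k + 1) := by
    intro k
    have hsplit2 : ((k : ℝ) + 1 / 2 : ℝ) = ((2 * k + 1 : ℝ)) * (1 / 2 : ℝ) := by ring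
    rw [hsplit2, cpowR_mul _ _ (by positivity) (by norm_num)]
    have h12 : (((1 : ℝ) / 2 : ℝ) : ℂ) ^ (-w) = (2 : ℂ) ^ w := by
      have : (((1 : ℝ) / 2 : ℝ) : ℂ) = (2 : ℂ)⁻¹ := by norm_num
      rw [this, Complex.inv_cpow _ _ (by
        rw [show (2:ℂ) = ((2:ℝ):ℂ) by norm_num, Complex.arg_ofReal_of_nonneg (by norm_num)]
        exact Real.pi_ne_zero.symm), Complex.cpow_neg, inv_inv]
    rw [h12]
    simp only [hf]
    rw [Complex.cpow_neg, one_div]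
    push_cast
    ring
  rw [tsum_congr hterm, tsum_mul_left, hodd_val, Complex.cpow_neg]
  field_simp

private lemma re_two_mul (s : ℂ) (hs : 1 < s.re) : 1 < (2 * s).re := by
  have : (2 * s).re = 2 * s.re := by simp [Complex.mul_re]
  rw [this]; linarith

private lemma inner_int (s : ℂ) (hs : 1 < s.re) (c : ℝ) (hc : 0 < c) :
    ∑' k : ℕ, ((((k : ℝ) + 1) ^ 2 * π ^ 2 * c ^ 2 : ℝ) : ℂ) ^ (-s)
      = riemannZeta (2 * s) * (((π : ℝ) : ℂ) ^ (-(2 * s)) * ((c : ℝ) : ℂ) ^ (-(2 * s))) := by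
  have hπ := Real.pi_pos
  have hterm : ∀ k : ℕ,
      ((((k : ℝ) + 1) ^ 2 * π ^ 2 * c ^ 2 : ℝ) : ℂ) ^ (-s)
        = (((k : ℝ) + 1 : ℝ) : ℂ) ^ (-(2 * s)) *
            (((π : ℝ) : ℂ) ^ (-(2 * s)) * ((c : ℝ) : ℂ) ^ (-(2 * s))) := by
    intro k
    have hk1 : (0:ℝ) < (k:ℝ) + 1 := by positivity
    have e1 : (((k : ℝ) + 1) ^ 2 * π ^ 2 * c ^ 2 : ℝ) = (((k : ℝ) + 1) * (π * c)) ^ 2 := by ring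
    rw [e1, cpowR_sq _ (by positivity), cpowR_mul _ _ hk1.le (by positivity),
      cpowR_mul _ _ hπ.le hc.le]
  rw [tsum_congr hterm, tsum_mul_right, tsum_int_base (re_two_mul s hs)]

private lemma inner_half (s : ℂ) (hs : 1 < s.re) (c : ℝ) (hc : 0 < c) :
    ∑' k : ℕ, ((((k : ℝ) + 1 / 2) ^ 2 * π ^ 2 * c ^ 2 : ℝ) : ℂ) ^ (-s)
      = ((2 : ℂ) ^ (2 * s) - 1) * riemannZeta (2 * s) *
          (((π : ℝ) : ℂ) ^ (-(2 * s)) * ((c : ℝ) : ℂ) ^ (-(2 * s))) := by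
  have hπ := Real.pi_pos
  have hterm : ∀ k : ℕ,
      ((((k : ℝ) + 1 / 2) ^ 2 * π ^ 2 * c ^ 2 : ℝ) : ℂ) ^ (-s)
        = (((k : ℝ) + 1 / 2 : ℝ) : ℂ) ^ (-(2 * s)) *
            (((π : ℝ) : ℂ) ^ (-(2 * s)) * ((c : ℝ) : ℂ) ^ (-(2 * s))) := by
    intro k
    have hk1 : (0:ℝ) < (k:ℝ) + 1 / 2 := by positivity
    have e1 : (((k : ℝ) + 1 / 2) ^ 2 * π ^ 2 * c ^ 2 : ℝ)
        = (((k : ℝ) + 1 / 2) * (π * c)) ^ 2 := by ring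
    rw [e1, cpowR_sq _ (by positivity), cpowR_mul _ _ hk1.le (by positivity),
      cpowR_mul _ _ hπ.le hc.le]
  rw [tsum_congr hterm, tsum_mul_right, tsum_half_base (re_two_mul s hs)]

private lemma split_eval (g : ℕ → ℂ) (c₁ c₂ c₃ c₄ r₁ r₂ : ℂ)
    (h₁ : ‖r₁‖ < 1) (h₂ : ‖r₂‖ < 1)
    (he : ∀ k, g (2 * k) = c₁ * r₁ ^ k + c₂ * r₂ ^ k)
    (ho : ∀ k, g (2 * k + 1) = c₃ * r₁ ^ k + c₄ * r₂ ^ k) :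
    ∑' n, g n = (c₁ + c₃) * (1 - r₁)⁻¹ + (c₂ + c₄) * (1 - r₂)⁻¹ := by
  have sg1 := summable_geometric_of_norm_lt_one h₁
  have sg2 := summable_geometric_of_norm_lt_one h₂
  have s1 : Summable (fun k => g (2 * k)) :=
    ((sg1.mul_left c₁).add (sg2.mul_left c₂)).congr fun k => (he k).symm
  have s2 : Summable (fun k => g (2 * k + 1)) :=
    ((sg1.mul_left c₃).add (sg2.mul_left c₄)).congr fun k => (ho k).symm
  rw [← tsum_even_add_odd s1 s2, tsum_congr he, tsum_congr ho,
    Summable.tsum_add (sg1.mul_left c₁) (sg2.mul_left c₂), Summable.tsum_add (sg1.mul_left c₃) (sg2.mul_left c₄),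
    tsum_mul_left, tsum_mul_left, tsum_mul_left, tsum_mul_left,
    tsum_geometric_of_norm_lt_one h₁, tsum_geometric_of_norm_lt_one h₂]
  ring

private lemma cpow_half (w : ℂ) : (((1:ℝ)/2 : ℝ) : ℂ) ^ (-w) = (2 : ℂ) ^ w := by
  have h : (((1:ℝ)/2 : ℝ) : ℂ) = (2 : ℂ)⁻¹ := by norm_num
  rw [h, Complex.inv_cpow _ _ (by
    rw [show (2:ℂ) = ((2:ℝ):ℂ) by norm_num, Complex.arg_ofReal_of_nonneg (by norm_num)]
    exact Real.pi_ne_zero.symm), Complex.cpow_neg, inv_inv]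


private lemma final_core (X B : ℂ) (hX : X ≠ 0) (hB : B ≠ 0)
    (h4 : B - 4 ≠ 0) (h24 : B - 24 ≠ 0) :
    1 + ((2*X⁻¹*(X-1) + 4*B⁻¹*(X-1)) + (-(2*B⁻¹) + -(4*X⁻¹*B⁻¹)) + (-(X*B⁻¹) + -(2*B⁻¹))) * (B*(B-4)⁻¹)
      + ((4*B⁻¹) + (4*B⁻¹ + 24*X⁻¹*B⁻¹) + (2*X*B⁻¹ + 12*B⁻¹)) * (B*(B-24)⁻¹) =
    ((X + 4) / 12 + (X / 2 + 1) / X) * (24 / (B - 24)) +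
      (3 * X - 6 + (6 * X - 12) / X) / (B - 4) +
      (X * 2 - 2) / X + 1 := by
  have hx : X * X⁻¹ = 1 := mul_inv_cancel₀ hX
  have hb : B * B⁻¹ = 1 := mul_inv_cancel₀ hB
  have hu : (B - 4) * (B - 4)⁻¹ = 1 := mul_inv_cancel₀ h4
  have hv : (B - 24) * (B - 24)⁻¹ = 1 := mul_inv_cancel₀ h24
  linear_combination
    ((-2:ℂ) + (-12:ℂ)*(B-24)⁻¹ + (-6:ℂ)*(B-4)⁻¹ + (2:ℂ)*B*(B-4)⁻¹) * hx +
    ((20:ℂ)*(B-24)⁻¹ + (-8:ℂ)*(B-4)⁻¹ + (24:ℂ)*X⁻¹*(B-24)⁻¹ + (-4:ℂ)*X⁻¹*(B-4)⁻¹ +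
      (2:ℂ)*X*(B-24)⁻¹ + (3:ℂ)*X*(B-4)⁻¹) * hb +
    ((2:ℂ) + (-2:ℂ)*X⁻¹) * hu

set_option maxHeartbeats 2000000 in
/-- For `Re s > 1`, the spectral zeta function of the Laakso space with alternating sequence
`j = {2,3,2,3,...}` (so `I_{2k} = 6^k`, `I_{2k+1} = 2·6^k`) equals
`(ζ(2s)/π^(2s)) · [((2^{2s}+4)/12 + (2^{2s−1}+1)/2^{2s})·24/(6^{2s}−24)
+ (3·2^{2s}−6 + (6·2^{2s}−12)/2^{2s})/(6^{2s}−4) + (2^{2s+1}−2)/2^{2s} + 1]`. -/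
theorem laakso_spectral_zeta_2323
    (j : ℕ → ℕ)
    (hodd : ∀ n, Odd n → j n = 2)
    (heven : ∀ n, 1 ≤ n → Even n → j n = 3)
    (I : ℕ → ℕ) (hI : ∀ n, I n = ∏ i ∈ Finset.Icc 1 n, j i)
    (s : ℂ) (hs : 1 < s.re) :
    (∑' k : ℕ, ((((k : ℝ) + 1) ^ 2 * π ^ 2 : ℝ) : ℂ) ^ (-s)) +
    (∑' n : ℕ, (2 : ℂ) ^ (n + 1) *
      ∑' k : ℕ, ((((k : ℝ) + 1 / 2) ^ 2 * π ^ 2 * (I (n + 1) : ℝ) ^ 2 : ℝ) : ℂ) ^ (-s)) +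
    (∑' n : ℕ, ((2 ^ n * (j (n + 1) - 2) * I n : ℕ) : ℂ) *
      ∑' k : ℕ, ((((k : ℝ) + 1) ^ 2 * π ^ 2 * (I (n + 1) : ℝ) ^ 2 : ℝ) : ℂ) ^ (-s)) +
    (∑' n : ℕ, ((2 ^ (n + 1) * (I (n + 1) - 1) : ℕ) : ℂ) *
      ∑' k : ℕ, ((((k : ℝ) + 1) ^ 2 * π ^ 2 * (I (n + 2) : ℝ) ^ 2 : ℝ) : ℂ) ^ (-s)) +
    (∑' n : ℕ, ((2 ^ n * (I (n + 1) - 1) : ℕ) : ℂ) *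
      ∑' k : ℕ, ((((k : ℝ) + 1) ^ 2 * π ^ 2 * (I (n + 2) : ℝ) ^ 2 / 4 : ℝ) : ℂ) ^ (-s)) =
    (riemannZeta (2 * s) / (π : ℂ) ^ (2 * s)) *
      ((((2 : ℂ) ^ (2 * s) + 4) / 12 + ((2 : ℂ) ^ (2 * s - 1) + 1) / (2 : ℂ) ^ (2 * s)) *
          (24 / ((6 : ℂ) ^ (2 * s) - 24)) +
        (3 * (2 : ℂ) ^ (2 * s) - 6 + (6 * (2 : ℂ) ^ (2 * s) - 12) / (2 : ℂ) ^ (2 * s)) /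
          ((6 : ℂ) ^ (2 * s) - 4) +
        ((2 : ℂ) ^ (2 * s + 1) - 2) / (2 : ℂ) ^ (2 * s) + 1) := by
  -- I values
  have hI0 : I 0 = 1 := by rw [hI]; simp
  have hIsucc : ∀ n, I (n + 1) = I n * j (n + 1) := by
    intro n; rw [hI, hI, Finset.prod_Icc_succ_top (by omega : 1 ≤ n + 1)]
  have hIval : ∀ k, I (2 * k) = 6 ^ k ∧ I (2 * k + 1) = 2 * 6 ^ k := by
    intro k
    induction k with
    | zero =>
      refine ⟨by simpa using hI0, ?_⟩
      rw [show 2 * 0 + 1 = 0 + 1 by ring, hIsucc 0, hI0,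
        hodd 1 (Nat.odd_iff.2 (by omega))]
      norm_num
    | succ k ih =>
      have h1 : I (2 * k + 2) = 6 ^ (k + 1) := by
        rw [show 2 * k + 2 = (2 * k + 1) + 1 by ring, hIsucc, ih.2,
          heven (2 * k + 1 + 1) (by omega) (Nat.even_iff.2 (by omega))]
        ring
      constructor
      · rw [show 2 * (k + 1) = 2 * k + 2 by ring]; exact h1
      · rw [show 2 * (k + 1) + 1 = (2 * k + 2) + 1 by ring, hIsucc, h1,
          hodd (2 * k + 2 + 1) (Nat.odd_iff.2 (by omega))]
        ring
  have h16 : ∀ k : ℕ, (1:ℕ) ≤ 6 ^ k := fun k => Nat.one_le_pow _ _ (by norm_num)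
  -- abbreviations for atoms
  set X : ℂ := (2:ℂ) ^ (2*s) with hXdef
  set Y : ℂ := (2:ℂ) ^ (-(2*s)) with hYdef
  set V : ℂ := (6:ℂ) ^ (-(2*s)) with hVdef
  set Zc : ℂ := riemannZeta (2*s) with hZdef
  set P : ℂ := ((π:ℝ):ℂ) ^ (-(2*s)) with hPdef
  -- norm facts
  have hre : (2*s).re = 2 * s.re := by simp [Complex.mul_re]
  have hpos6 : (0:ℝ) < (6:ℝ) ^ ((2*s).re) := Real.rpow_pos_of_pos (by norm_num) _
  have h36 : (36:ℝ) < (6:ℝ) ^ ((2*s).re) := by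
    calc (36:ℝ) = (6:ℝ) ^ (2:ℝ) := by
          rw [show (2:ℝ) = ((2:ℕ):ℝ) by norm_num, Real.rpow_natCast]; norm_num
      _ < (6:ℝ) ^ ((2*s).re) := by
          refine (Real.rpow_lt_rpow_left_iff (by norm_num : (1:ℝ) < 6)).2 ?_
          rw [hre]; linarith
  have hVnorm : ‖V‖ = ((6:ℝ) ^ ((2*s).re))⁻¹ := by
    rw [hVdef, Complex.cpow_neg, norm_inv]
    congr 1
    rw [show (6:ℂ) = ((6:ℝ):ℂ) by norm_num,
      Complex.norm_cpow_eq_rpow_re_of_pos (by norm_num : (0:ℝ) < 6)]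
  have hr1 : ‖4 * V‖ < 1 := by
    rw [norm_mul, hVnorm, show ‖(4:ℂ)‖ = 4 by norm_num, ← div_eq_mul_inv]
    exact (div_lt_one hpos6).2 (by linarith)
  have hr2 : ‖24 * V‖ < 1 := by
    rw [norm_mul, hVnorm, show ‖(24:ℂ)‖ = 24 by norm_num, ← div_eq_mul_inv]
    exact (div_lt_one hpos6).2 (by linarith)
  -- cpow computations
  have hc6R : ∀ m : ℕ, (((6:ℝ)^m : ℝ):ℂ) ^ (-(2*s)) = V ^ m := by
    intro m
    rw [cpowR_pow 6 (by norm_num), hVdef]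
    norm_num
  have hc2x : ∀ m : ℕ, ((2*(6:ℝ)^m : ℝ):ℂ) ^ (-(2*s)) = Y * V ^ m := by
    intro m
    rw [cpowR_mul 2 ((6:ℝ)^m) (by norm_num) (by positivity), hc6R, hYdef]
    norm_num
  have hchalf : ∀ m : ℕ, (((6:ℝ)^m * (1/2) : ℝ):ℂ) ^ (-(2*s)) = X * V ^ m := by
    intro m
    rw [cpowR_mul ((6:ℝ)^m) (1/2) (by positivity) (by norm_num), hc6R, cpow_half, hXdef]
    ring
  -- numeral power helpers
  have hp0 : ∀ k : ℕ, (2:ℂ) ^ (2*k) = 4 ^ k := by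
    intro k; rw [pow_mul]; norm_num
  have hp1 : ∀ k : ℕ, (2:ℂ) ^ (2*k+1) = 2 * 4 ^ k := by
    intro k; rw [pow_succ, hp0]; ring
  have hp2 : ∀ k : ℕ, (2:ℂ) ^ (2*k+1+1) = 4 * 4 ^ k := by
    intro k; rw [pow_succ, hp1]; ring
  have h46 : ∀ k : ℕ, (24:ℂ) ^ k = 4 ^ k * 6 ^ k := by
    intro k; rw [← mul_pow]; norm_num
  -- Term 1
  have T1 : (∑' k : ℕ, ((((k : ℝ) + 1) ^ 2 * π ^ 2 : ℝ) : ℂ) ^ (-s)) = Zc * P := by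
    have h1 : (∑' k : ℕ, ((((k : ℝ) + 1) ^ 2 * π ^ 2 : ℝ) : ℂ) ^ (-s))
        = ∑' k : ℕ, ((((k : ℝ) + 1) ^ 2 * π ^ 2 * (1:ℝ) ^ 2 : ℝ) : ℂ) ^ (-s) :=
      tsum_congr fun k => by norm_num
    rw [h1, inner_int s hs 1 one_pos, ← hZdef, ← hPdef]
    norm_num
  have T2 : (∑' n : ℕ, (2 : ℂ) ^ (n + 1) *
      ∑' k : ℕ, ((((k : ℝ) + 1 / 2) ^ 2 * π ^ 2 * (I (n + 1) : ℝ) ^ 2 : ℝ) : ℂ) ^ (-s))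
      = (2*Y*((X-1)*Zc*P) + 4*V*((X-1)*Zc*P)) * (1 - 4*V)⁻¹ + (0+0) * (1 - 24*V)⁻¹ := by
    refine split_eval _ (2*Y*((X-1)*Zc*P)) 0 (4*V*((X-1)*Zc*P)) 0 (4*V) (24*V) hr1 hr2 ?_ ?_
    · intro k
      show (2:ℂ) ^ (2*k + 1) *
          (∑' k' : ℕ, ((((k' : ℝ) + 1 / 2) ^ 2 * π ^ 2 * (I (2*k + 1) : ℝ) ^ 2 : ℝ) : ℂ) ^ (-s)) = _
      have e : (I (2*k+1) : ℝ) = 2*(6:ℝ)^k := by rw [(hIval k).2]; push_cast; ring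
      simp only [e]
      rw [inner_half s hs (2*(6:ℝ)^k) (by positivity), hc2x k, hp1 k]
      simp only [mul_pow]
      ring
    · intro k
      show (2:ℂ) ^ (2*k + 1 + 1) *
          (∑' k' : ℕ, ((((k' : ℝ) + 1 / 2) ^ 2 * π ^ 2 * (I (2*k + 1 + 1) : ℝ) ^ 2 : ℝ) : ℂ) ^ (-s)) = _
      have e : (I (2*k+1+1) : ℝ) = (6:ℝ)^(k+1) := by
        rw [show 2*k+1+1 = 2*(k+1) by ring, (hIval (k+1)).1]; push_cast; ring
      simp only [e]
      rw [inner_half s hs ((6:ℝ)^(k+1)) (by positivity), hc6R (k+1), hp2 k]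
      simp only [mul_pow, pow_succ]
      ring
  have T3 : (∑' n : ℕ, ((2 ^ n * (j (n + 1) - 2) * I n : ℕ) : ℂ) *
      ∑' k : ℕ, ((((k : ℝ) + 1) ^ 2 * π ^ 2 * (I (n + 1) : ℝ) ^ 2 : ℝ) : ℂ) ^ (-s))
      = (0+0) * (1 - 4*V)⁻¹ + (0 + 4*V*(Zc*P)) * (1 - 24*V)⁻¹ := by
    refine split_eval _ 0 0 0 (4*V*(Zc*P)) (4*V) (24*V) hr1 hr2 ?_ ?_
    · intro k
      show ((2 ^ (2*k) * (j (2*k + 1) - 2) * I (2*k) : ℕ) : ℂ) * _ = _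
      rw [hodd (2*k+1) (Nat.odd_iff.2 (by omega))]
      simp
    · intro k
      show ((2 ^ (2*k+1) * (j (2*k+1 + 1) - 2) * I (2*k+1) : ℕ) : ℂ) *
          (∑' k' : ℕ, ((((k' : ℝ) + 1) ^ 2 * π ^ 2 * (I (2*k+1 + 1) : ℝ) ^ 2 : ℝ) : ℂ) ^ (-s)) = _
      rw [heven (2*k+1+1) (by omega) (Nat.even_iff.2 (by omega)), (hIval k).2]
      have e : (I (2*k+1+1) : ℝ) = (6:ℝ)^(k+1) := by
        rw [show 2*k+1+1 = 2*(k+1) by ring, (hIval (k+1)).1]; push_cast; ring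
      simp only [e]
      rw [inner_int s hs ((6:ℝ)^(k+1)) (by positivity), hc6R (k+1)]
      norm_num
      rw [hp1 k]
      simp only [mul_pow, pow_succ, h46]
      ring
  have T4 : (∑' n : ℕ, ((2 ^ (n + 1) * (I (n + 1) - 1) : ℕ) : ℂ) *
      ∑' k : ℕ, ((((k : ℝ) + 1) ^ 2 * π ^ 2 * (I (n + 2) : ℝ) ^ 2 : ℝ) : ℂ) ^ (-s))
      = (-(2*V*(Zc*P)) + -(4*Y*V*(Zc*P))) * (1 - 4*V)⁻¹
        + (4*V*(Zc*P) + 24*Y*V*(Zc*P)) * (1 - 24*V)⁻¹ := by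
    refine split_eval _ (-(2*V*(Zc*P))) (4*V*(Zc*P)) (-(4*Y*V*(Zc*P))) (24*Y*V*(Zc*P))
      (4*V) (24*V) hr1 hr2 ?_ ?_
    · intro k
      show ((2 ^ (2*k + 1) * (I (2*k + 1) - 1) : ℕ) : ℂ) *
          (∑' k' : ℕ, ((((k' : ℝ) + 1) ^ 2 * π ^ 2 * (I (2*k + 2) : ℝ) ^ 2 : ℝ) : ℂ) ^ (-s)) = _
      rw [(hIval k).2]
      have e : (I (2*k+2) : ℝ) = (6:ℝ)^(k+1) := by
        rw [show 2*k+2 = 2*(k+1) by ring, (hIval (k+1)).1]; push_cast; ring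
      simp only [e]
      rw [inner_int s hs ((6:ℝ)^(k+1)) (by positivity), hc6R (k+1)]
      have h1 : (1:ℕ) ≤ 2 * 6^k := by have := h16 k; omega
      push_cast [Nat.cast_sub h1]
      rw [hp1 k]
      simp only [mul_pow, pow_succ, h46]
      ring
    · intro k
      show ((2 ^ (2*k+1 + 1) * (I (2*k+1 + 1) - 1) : ℕ) : ℂ) *
          (∑' k' : ℕ, ((((k' : ℝ) + 1) ^ 2 * π ^ 2 * (I (2*k+1 + 2) : ℝ) ^ 2 : ℝ) : ℂ) ^ (-s)) = _
      have e0 : I (2*k+1+1) = 6^(k+1) := by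
        rw [show 2*k+1+1 = 2*(k+1) by ring]; exact (hIval (k+1)).1
      rw [e0]
      have e : (I (2*k+1+2) : ℝ) = 2*(6:ℝ)^(k+1) := by
        rw [show 2*k+1+2 = 2*(k+1)+1 by ring, (hIval (k+1)).2]; push_cast; ring
      simp only [e]
      rw [inner_int s hs (2*(6:ℝ)^(k+1)) (by positivity), hc2x (k+1)]
      have h1 : (1:ℕ) ≤ 6^(k+1) := h16 (k+1)
      push_cast [Nat.cast_sub h1]
      rw [hp2 k]
      simp only [mul_pow, pow_succ, h46]
      ring
  have T5 : (∑' n : ℕ, ((2 ^ n * (I (n + 1) - 1) : ℕ) : ℂ) *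
      ∑' k : ℕ, ((((k : ℝ) + 1) ^ 2 * π ^ 2 * (I (n + 2) : ℝ) ^ 2 / 4 : ℝ) : ℂ) ^ (-s))
      = (-(X*V*(Zc*P)) + -(2*V*(Zc*P))) * (1 - 4*V)⁻¹
        + (2*X*V*(Zc*P) + 12*V*(Zc*P)) * (1 - 24*V)⁻¹ := by
    refine split_eval _ (-(X*V*(Zc*P))) (2*X*V*(Zc*P)) (-(2*V*(Zc*P))) (12*V*(Zc*P))
      (4*V) (24*V) hr1 hr2 ?_ ?_
    · intro k
      show ((2 ^ (2*k) * (I (2*k + 1) - 1) : ℕ) : ℂ) *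
          (∑' k' : ℕ, ((((k' : ℝ) + 1) ^ 2 * π ^ 2 * (I (2*k + 2) : ℝ) ^ 2 / 4 : ℝ) : ℂ) ^ (-s)) = _
      rw [(hIval k).2]
      have e : (I (2*k+2) : ℝ) = (6:ℝ)^(k+1) := by
        rw [show 2*k+2 = 2*(k+1) by ring, (hIval (k+1)).1]; push_cast; ring
      simp only [e]
      have hcg : (∑' k' : ℕ, ((((k' : ℝ) + 1) ^ 2 * π ^ 2 * ((6:ℝ)^(k+1)) ^ 2 / 4 : ℝ) : ℂ) ^ (-s))
          = ∑' k' : ℕ, ((((k' : ℝ) + 1) ^ 2 * π ^ 2 * ((6:ℝ)^(k+1) * (1/2)) ^ 2 : ℝ) : ℂ) ^ (-s) :=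
        tsum_congr fun k' => congrArg (fun t : ℝ => (t:ℂ)^(-s)) (by ring)
      rw [hcg, inner_int s hs ((6:ℝ)^(k+1) * (1/2)) (by positivity), hchalf (k+1)]
      have h1 : (1:ℕ) ≤ 2 * 6^k := by have := h16 k; omega
      push_cast [Nat.cast_sub h1]
      rw [hp0 k]
      simp only [mul_pow, pow_succ, h46]
      ring
    · intro k
      show ((2 ^ (2*k+1) * (I (2*k+1 + 1) - 1) : ℕ) : ℂ) *
          (∑' k' : ℕ, ((((k' : ℝ) + 1) ^ 2 * π ^ 2 * (I (2*k+1 + 2) : ℝ) ^ 2 / 4 : ℝ) : ℂ) ^ (-s)) = _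
      have e0 : I (2*k+1+1) = 6^(k+1) := by
        rw [show 2*k+1+1 = 2*(k+1) by ring]; exact (hIval (k+1)).1
      rw [e0]
      have e : (I (2*k+1+2) : ℝ) = 2*(6:ℝ)^(k+1) := by
        rw [show 2*k+1+2 = 2*(k+1)+1 by ring, (hIval (k+1)).2]; push_cast; ring
      simp only [e]
      have hcg : (∑' k' : ℕ, ((((k' : ℝ) + 1) ^ 2 * π ^ 2 * (2*(6:ℝ)^(k+1)) ^ 2 / 4 : ℝ) : ℂ) ^ (-s))
          = ∑' k' : ℕ, ((((k' : ℝ) + 1) ^ 2 * π ^ 2 * ((6:ℝ)^(k+1)) ^ 2 : ℝ) : ℂ) ^ (-s) :=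
        tsum_congr fun k' => congrArg (fun t : ℝ => (t:ℂ)^(-s)) (by ring)
      rw [hcg, inner_int s hs ((6:ℝ)^(k+1)) (by positivity), hc6R (k+1)]
      have h1 : (1:ℕ) ≤ 6^(k+1) := h16 (k+1)
      push_cast [Nat.cast_sub h1]
      rw [hp1 k]
      simp only [mul_pow, pow_succ, h46]
      ring
  rw [T1, T2, T3, T4, T5]
  -- final algebra
  have hX0 : X ≠ 0 := by rw [hXdef]; simp [Complex.cpow_eq_zero_iff]
  have hB0 : (6:ℂ)^(2*s) ≠ 0 := by simp [Complex.cpow_eq_zero_iff]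
  have hpi0 : ((π:ℝ):ℂ) ^ (2*s) ≠ 0 := by
    simp [Complex.cpow_eq_zero_iff, Real.pi_ne_zero]
  have hnormB6 : ‖(6:ℂ)^(2*s)‖ = (6:ℝ)^((2*s).re) := by
    rw [show (6:ℂ) = ((6:ℝ):ℂ) by norm_num,
      Complex.norm_cpow_eq_rpow_re_of_pos (by norm_num : (0:ℝ) < 6)]
  have hB24 : (6:ℂ)^(2*s) - 24 ≠ 0 := by
    intro h
    have h2 : (6:ℂ)^(2*s) = 24 := by linear_combination h
    rw [h2, show ‖(24:ℂ)‖ = 24 by norm_num] at hnormB6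
    linarith
  have hB4 : (6:ℂ)^(2*s) - 4 ≠ 0 := by
    intro h
    have h2 : (6:ℂ)^(2*s) = 4 := by linear_combination h
    rw [h2, show ‖(4:ℂ)‖ = 4 by norm_num] at hnormB6
    linarith
  have hYX : Y = X⁻¹ := by rw [hYdef, hXdef, Complex.cpow_neg]
  have hVB : V = ((6:ℂ)^(2*s))⁻¹ := by rw [hVdef, Complex.cpow_neg]
  have hPpi : P = (((π:ℝ):ℂ)^(2*s))⁻¹ := by rw [hPdef, Complex.cpow_neg]
  have hXsub : (2:ℂ)^(2*s - 1) = X / 2 := by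
    rw [Complex.cpow_sub _ _ (two_ne_zero), Complex.cpow_one, hXdef]
  have hXadd : (2:ℂ)^(2*s + 1) = X * 2 := by
    rw [Complex.cpow_add _ _ (two_ne_zero), Complex.cpow_one, hXdef]
  rw [hYX, hVB, hPpi, hXsub, hXadd]
  have h4i : ((1:ℂ) - 4*((6:ℂ)^(2*s))⁻¹)⁻¹ = (6:ℂ)^(2*s) * ((6:ℂ)^(2*s) - 4)⁻¹ := by
    rw [show (1:ℂ) - 4*((6:ℂ)^(2*s))⁻¹ = ((6:ℂ)^(2*s) - 4) * ((6:ℂ)^(2*s))⁻¹ by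
      field_simp, mul_inv, inv_inv]
    ring
  have h24i : ((1:ℂ) - 24*((6:ℂ)^(2*s))⁻¹)⁻¹ = (6:ℂ)^(2*s) * ((6:ℂ)^(2*s) - 24)⁻¹ := by
    rw [show (1:ℂ) - 24*((6:ℂ)^(2*s))⁻¹ = ((6:ℂ)^(2*s) - 24) * ((6:ℂ)^(2*s))⁻¹ by
      field_simp, mul_inv, inv_inv]
    ring
  rw [h4i, h24i]
  linear_combination (Zc * (((π:ℝ):ℂ)^(2*s))⁻¹) *
    final_core X ((6:ℂ)^(2*s)) hX0 hB0 hB4 hB24
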